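/- Let c₁, c₂, c₃ ∈ ℝ, not all zero. Then the function G(h) = c₁(h−1) + c₂h + c₃·(h + h²/2 + log(1−h)) has at most two zeros in the interval (−∞, 0): the set {h < 0 : G(h) = 0} has cardinality at most 2. Consequently every bifurcation function c₁M₁¹ + c₂M₂¹ + c₃M₃¹ of the first period annulus has at most two zeros there, so at most two limit cycles bifurcate from the open period annulus around (0,0). -/

import Mathlib

lemma rolle_step (c1 c2 c3 p q : ℝ) (hpq : p < q) (hq : q < 0)
    (hp0 : c1 * (p - 1) + c2 * p + c3 * (p + p ^ 2 / 2 + Real.log (1 - p)) = 0)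
    (hq0 : c1 * (q - 1) + c2 * q + c3 * (q + q ^ 2 / 2 + Real.log (1 - q)) = 0) :
    ∃ z, p < z ∧ z < q ∧ c1 + c2 + c3 * (1 + z - 1 / (1 - z)) = 0 := by
  set f : ℝ → ℝ := fun h => c1 * (h - 1) + c2 * h + c3 * (h + h ^ 2 / 2 + Real.log (1 - h))
  have hasD : ∀ x : ℝ, x < 1 → HasDerivAt f (c1 + c2 + c3 * (1 + x - 1 / (1 - x))) x := by
    intro x hx
    have hne : (1 : ℝ) - x ≠ 0 := by linarith
    have hlog : HasDerivAt (fun h : ℝ => Real.log (1 - h)) ((-1) / (1 - x)) x := by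
      have h1 : HasDerivAt (fun h : ℝ => 1 - h) (-1) x := by
        simpa using (hasDerivAt_id' x).const_sub (1:ℝ)
      exact h1.log hne
    have hsq : HasDerivAt (fun h : ℝ => h ^ 2 / 2) x x := by
      simpa using (hasDerivAt_pow 2 x).div_const 2
    have h3 : HasDerivAt (fun h : ℝ => h + h ^ 2 / 2 + Real.log (1 - h))
        (1 + x + (-1) / (1 - x)) x := ((hasDerivAt_id x).add hsq).add hlog
    have h1 : HasDerivAt (fun h : ℝ => c1 * (h - 1)) c1 x := by
      simpa using ((hasDerivAt_id x).sub_const 1).const_mul c1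
    have h2 : HasDerivAt (fun h : ℝ => c2 * h) c2 x := by
      simpa using (hasDerivAt_id x).const_mul c2
    have := (h1.add h2).add (h3.const_mul c3)
    refine this.congr_deriv ?_
    ring
  have hcont : ContinuousOn f (Set.Icc p q) := by
    intro x hx
    exact (hasD x (by have := hx.2; linarith)).continuousAt.continuousWithinAt
  have := exists_hasDerivAt_eq_zero hpq hcont (hp0.trans hq0.symm)
    (fun x hx => hasD x (by have := hx.2; linarith))
  obtain ⟨z, hz, hz0⟩ := this
  exact ⟨z, hz.1, hz.2, hz0⟩

theorem bifurcation_function_at_most_two_zeros (c1 c2 c3 : ℝ)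
    (hc : ¬(c1 = 0 ∧ c2 = 0 ∧ c3 = 0)) :
    {h : ℝ | h < 0 ∧
        c1 * (h - 1) + c2 * h + c3 * (h + h ^ 2 / 2 + Real.log (1 - h)) = 0}.encard
      ≤ 2 := by
  set S := {h : ℝ | h < 0 ∧
      c1 * (h - 1) + c2 * h + c3 * (h + h ^ 2 / 2 + Real.log (1 - h)) = 0} with hS
  have key : ∀ x y z : ℝ, x < y → y < z → x ∈ S → y ∈ S → z ∈ S → False := by
    intro x y z hxy hyz hx hy hz
    obtain ⟨hx0, hxe⟩ := hx
    obtain ⟨hy0, hye⟩ := hy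
    obtain ⟨hz0, hze⟩ := hz
    obtain ⟨u, hxu, huy, hu⟩ := rolle_step c1 c2 c3 x y hxy hy0 hxe hye
    obtain ⟨v, hyv, hvz, hv⟩ := rolle_step c1 c2 c3 y z hyz hz0 hye hze
    have hu0 : u < 0 := lt_trans huy hy0
    have hv0 : v < 0 := lt_trans hvz hz0
    have huv : u < v := lt_trans huy hyv
    by_cases hc3 : c3 = 0
    · subst hc3
      simp only [zero_mul, add_zero] at hu hxe hye
      -- hu : c1 + c2 = 0, hxe : c1*(x-1)+c2*x = 0
      have hc1 : c1 = 0 := by linear_combination x * hu - hxe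
      have hc2 : c2 = 0 := by linarith
      exact hc (⟨hc1, hc2, rfl⟩)
    · have h1u : (0:ℝ) < 1 - u := by linarith
      have h1v : (0:ℝ) < 1 - v := by linarith
      have heq : c3 * (1 + u - 1 / (1 - u)) = c3 * (1 + v - 1 / (1 - v)) := by linarith
      have heq2 : 1 + u - 1 / (1 - u) = 1 + v - 1 / (1 - v) := mul_left_cancel₀ hc3 heq
      have hpoly : u ^ 2 * (1 - v) = v ^ 2 * (1 - u) := by
        field_simp at heq2
        nlinarith [heq2]
      nlinarith [mul_pos (sub_pos.2 huv) (by nlinarith : u * v - (u + v) > 0), hpoly]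
  by_contra hcon
  push_neg at hcon
  have h3 : (3 : ℕ∞) ≤ S.encard := Order.add_one_le_of_lt hcon
  obtain ⟨t, hts, ht3⟩ := Set.exists_subset_encard_eq h3
  obtain ⟨a, b, c, hab, hac, hbc, rfl⟩ := Set.encard_eq_three.mp ht3
  have ha : a ∈ S := hts (by simp)
  have hb : b ∈ S := hts (by simp)
  have hcS : c ∈ S := hts (by simp)
  rcases lt_trichotomy a b with h1 | h1 | h1
  · rcases lt_trichotomy b c with h2 | h2 | h2
    · exact key a b c h1 h2 ha hb hcS
    · exact hbc h2
    · rcases lt_trichotomy a c with h3' | h3' | h3'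
      · exact key a c b h3' h2 ha hcS hb
      · exact hac h3'
      · exact key c a b h3' h1 hcS ha hb
  · exact hab h1
  · rcases lt_trichotomy a c with h2 | h2 | h2
    · exact key b a c h1 h2 hb ha hcS
    · exact hac h2
    · rcases lt_trichotomy b c with h3' | h3' | h3'
      · exact key b c a h3' h2 hb hcS ha
      · exact hbc h3'
      · exact key c b a h3' h1 hcS hb ha
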